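/- Let G be the graph on vertex set V = {1,2,3} × {0,1,…,k} with the vertices (1,0),(2,0),(3,0) identified to a single vertex s and (1,k),(2,k),(3,k) identified to a single vertex s', and with edges joining (i, r−1) to (i, r) of length λ_r > 0 (the same λ_r for each i = 1,2,3), where λ_r = λ_{k−r+1} for all r. For 1 ≤ r ≤ ⌊k/2⌋, let m_r be the (2,3)-semimetric with parts S¹_r = {(i,p) : p < r}, S²_r = {(i,p) : p > k−r}, and Tʲ_r = {(j,p) : r ≤ p ≤ k−r} for j = 1,2,3; and if k is odd let m_{⌈k/2⌉} be the cut semimetric of X = {(i,p) : p ≤ ⌊k/2⌋}. Then the shortest-path distance of G equals Σ_{r=1}^{⌈k/2⌉} λ_r · m_r. -/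

import Mathlib

private def Tsum (lam : ℕ → ℝ) (a b : ℕ) : ℝ := ∑ r ∈ Finset.Ioc a b, lam r

private lemma Tsum_empty (lam : ℕ → ℝ) {a b : ℕ} (h : b ≤ a) : Tsum lam a b = 0 := by
  rw [Tsum, Finset.Ioc_eq_empty (by omega), Finset.sum_empty]

private lemma Tsum_consec (lam : ℕ → ℝ) {a b c : ℕ} (h1 : a ≤ b) (h2 : b ≤ c) :
    Tsum lam a b + Tsum lam b c = Tsum lam a c :=
  Finset.sum_Ioc_consecutive _ h1 h2

private lemma Tsum_nonneg {k : ℕ} {lam : ℕ → ℝ}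
    (hpos : ∀ r ∈ Finset.Icc 1 k, 0 < lam r) (a : ℕ) {b : ℕ} (hb : b ≤ k) :
    0 ≤ Tsum lam a b := by
  refine Finset.sum_nonneg fun r hr => ?_
  simp only [Finset.mem_Ioc] at hr
  exact (hpos r (Finset.mem_Icc.mpr ⟨by omega, by omega⟩)).le

private lemma Tsum_ind (lam : ℕ → ℝ) (B a b : ℕ) :
    (∑ r ∈ Finset.Ioc 0 B, if a < r ∧ r ≤ b then lam r else 0)
      = Tsum lam a (min b B) := by
  rw [Tsum, ← Finset.sum_filter]
  congr 1
  ext x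
  simp only [Finset.mem_filter, Finset.mem_Ioc]
  omega

private lemma Tsum_sym {k : ℕ} {lam : ℕ → ℝ}
    (hsymm : ∀ r ∈ Finset.Icc 1 k, lam r = lam (k - r + 1))
    (a : ℕ) {b : ℕ} (hb : b ≤ k) :
    Tsum lam a b = Tsum lam (k - b) (k - a) := by
  rw [Tsum, Tsum]
  rcases le_or_gt b a with h | h
  · rw [Finset.Ioc_eq_empty (by omega), Finset.Ioc_eq_empty (by omega)]
  · refine Finset.sum_nbij' (fun r => k + 1 - r) (fun r => k + 1 - r) ?_ ?_ ?_ ?_ ?_ <;>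
      intro r hr <;> simp only [Finset.mem_Ioc] at hr ⊢
    · omega
    · omega
    · omega
    · omega
    · rw [hsymm r (Finset.mem_Icc.mpr ⟨by omega, by omega⟩)]
      congr 1
      omega

private lemma Tsum_mono {k : ℕ} {lam : ℕ → ℝ}
    (hpos : ∀ r ∈ Finset.Icc 1 k, 0 < lam r) {a b : ℕ} (hab : a ≤ b) (hb : b ≤ k) :
    Tsum lam 0 a ≤ Tsum lam 0 b := by
  have := Tsum_consec lam (Nat.zero_le a) hab
  have := Tsum_nonneg hpos a hb
  linarith

private lemma core_same {k : ℕ} {lam : ℕ → ℝ}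
    (hsymm : ∀ r ∈ Finset.Icc 1 k, lam r = lam (k - r + 1))
    {p q : ℕ} (hpq : p ≤ q) (hq : q ≤ k) :
    Tsum lam p (min q ((k + 1) / 2))
      + Tsum lam (k - q) (min (min (k - p) (k / 2)) ((k + 1) / 2))
      = Tsum lam p q := by
  have hp : p ≤ k := le_trans hpq hq
  have hs : Tsum lam (k - q) (min (min (k - p) (k / 2)) ((k + 1) / 2))
      = Tsum lam (max p ((k + 1) / 2)) q := by
    rw [Tsum_sym hsymm (k - q) (b := min (min (k - p) (k / 2)) ((k + 1) / 2)) (by omega),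
      show k - min (min (k - p) (k / 2)) ((k + 1) / 2) = max p ((k + 1) / 2) from by omega,
      show k - (k - q) = q from by omega]
  rw [hs]
  by_cases hqH : q ≤ (k + 1) / 2
  · rw [show min q ((k + 1) / 2) = q from by omega,
      Tsum_empty lam (a := max p ((k + 1) / 2)) (b := q) (by omega)]
    ring
  · by_cases hpH : p ≤ (k + 1) / 2
    · rw [show min q ((k + 1) / 2) = (k + 1) / 2 from by omega,
        show max p ((k + 1) / 2) = (k + 1) / 2 from by omega]
      exact Tsum_consec lam hpH (by omega)
    · rw [show min q ((k + 1) / 2) = (k + 1) / 2 from by omega,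
        show max p ((k + 1) / 2) = p from by omega,
        Tsum_empty lam (a := p) (b := (k + 1) / 2) (by omega)]
      ring

private lemma core_diff {k : ℕ} {lam : ℕ → ℝ}
    (hsymm : ∀ r ∈ Finset.Icc 1 k, lam r = lam (k - r + 1))
    {p q : ℕ} (hpq : p ≤ q) (hsum : p + q ≤ k) (hq : q ≤ k) :
    Tsum lam 0 (min p (k - p)) + Tsum lam 0 (min q (k - q))
      + Tsum lam (max p (k - q)) (k / 2) + Tsum lam (max p (k - q)) ((k + 1) / 2)
      = Tsum lam 0 p + Tsum lam 0 q := by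
  rw [show min p (k - p) = p from by omega, show max p (k - q) = k - q from by omega]
  by_cases hqF : q ≤ k / 2
  · rw [show min q (k - q) = q from by omega, Tsum_empty lam (a := k - q) (b := k / 2) (by omega),
      Tsum_empty lam (a := k - q) (b := (k + 1) / 2) (by omega)]
    ring
  · rw [show min q (k - q) = k - q from by omega]
    have e1 : Tsum lam 0 (k - q) + Tsum lam (k - q) (k / 2) = Tsum lam 0 (k / 2) :=
      Tsum_consec lam (Nat.zero_le _) (by omega)
    have e2 : Tsum lam (k - q) ((k + 1) / 2) = Tsum lam (k / 2) q := by
      rw [Tsum_sym hsymm (k - q) (b := (k + 1) / 2) (by omega),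
        show k - (k + 1) / 2 = k / 2 from by omega, show k - (k - q) = q from by omega]
    have e3 : Tsum lam 0 (k / 2) + Tsum lam (k / 2) q = Tsum lam 0 q :=
      Tsum_consec lam (Nat.zero_le _) (by omega)
    linarith




set_option maxHeartbeats 1600000 in
/-- In the graph made of three internally disjoint paths between `s`
and `s'`, each with edges of lengths `λ₁, …, λ_k` satisfying `λ_r = λ_{k−r+1}`, the
shortest-path distance (given by the explicit formulas below on vertices `(i, p)`,
`i ∈ {1,2,3}`, `0 ≤ p ≤ k`, with the endpoints identified) equals the weighted sum
`Σ_{r=1}^{⌈k/2⌉} λ_r · m_r` of the (2,3)-semimetrics `m_r` (`1 ≤ r ≤ ⌊k/2⌋`) with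
parts `S¹_r = {p < r}`, `S²_r = {p > k−r}`, `Tʲ_r = {(j,p) : r ≤ p ≤ k−r}` and, for
`k` odd, of the cut semimetric `m_{⌈k/2⌉}` of `X = {p ≤ ⌊k/2⌋}`. -/
theorem three_path_distance_decomposition (k : ℕ) (hk : 1 ≤ k) (lam : ℕ → ℝ)
    (hpos : ∀ r ∈ Finset.Icc 1 k, 0 < lam r)
    (hsymm : ∀ r ∈ Finset.Icc 1 k, lam r = lam (k - r + 1))
    (d : Fin 3 × ℕ → Fin 3 × ℕ → ℝ)
    (hd_same : ∀ (i : Fin 3) (p q : ℕ), p ≤ k → q ≤ k →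
      d (i, p) (i, q) = ∑ r ∈ Finset.Icc (min p q + 1) (max p q), lam r)
    (hd_diff : ∀ (i j : Fin 3) (p q : ℕ), i ≠ j → p ≤ k → q ≤ k →
      d (i, p) (j, q) =
        min ((∑ r ∈ Finset.Icc 1 p, lam r) + ∑ r ∈ Finset.Icc 1 q, lam r)
          ((∑ r ∈ Finset.Icc (p + 1) k, lam r) + ∑ r ∈ Finset.Icc (q + 1) k, lam r))
    (cls : ℕ → Fin 3 × ℕ → ℕ)
    (hcls : ∀ r (i : Fin 3) (p : ℕ),
      cls r (i, p) = if p < r then 0 else if k - r < p then 1 else 2 + (i : ℕ))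
    (m : ℕ → Fin 3 × ℕ → Fin 3 × ℕ → ℝ)
    (hm23 : ∀ r, 1 ≤ r → 2 * r ≤ k → ∀ u v, m r u v =
      if cls r u = cls r v then 0
      else if (cls r u ≤ 1 ∧ 2 ≤ cls r v) ∨ (cls r v ≤ 1 ∧ 2 ≤ cls r u) then 1
      else 2)
    (hmcut : k % 2 = 1 → ∀ u v : Fin 3 × ℕ,
      m ((k + 1) / 2) u v = if (u.2 ≤ k / 2 ↔ v.2 ≤ k / 2) then 0 else 1) :
    ∀ u v : Fin 3 × ℕ, u.2 ≤ k → v.2 ≤ k →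
      d u v = ∑ r ∈ Finset.Icc 1 ((k + 1) / 2), lam r * m r u v := by
  have hIccIoc : Finset.Icc 1 ((k + 1) / 2) = Finset.Ioc 0 ((k + 1) / 2) := by
    ext x; simp only [Finset.mem_Icc, Finset.mem_Ioc]; omega
  -- pointwise description of m on a single path
  have pt_same : ∀ (i : Fin 3) (p q : ℕ), p ≤ q → q ≤ k → ∀ r ∈ Finset.Ioc 0 ((k + 1) / 2),
      m r (i, p) (i, q) = (if p < r ∧ r ≤ q then (1 : ℝ) else 0)
        + (if k - q < r ∧ r ≤ min (k - p) (k / 2) then 1 else 0) := by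
    intro i p q hpq hq r hr
    simp only [Finset.mem_Ioc] at hr
    by_cases h2 : 2 * r ≤ k
    · rw [hm23 r (by omega) h2, hcls, hcls]
      split_ifs <;> first | (exfalso; omega) | (norm_num; done) | (exfalso; tauto) | (exfalso; simp_all)
    · have hodd : k % 2 = 1 := by omega
      have hrH : r = (k + 1) / 2 := by omega
      subst hrH
      rw [hmcut hodd (i, p) (i, q)]
      show (if (p ≤ k / 2 ↔ q ≤ k / 2) then (0 : ℝ) else 1) = _
      split_ifs <;> first | (exfalso; omega) | (norm_num; done) | (exfalso; tauto) | (exfalso; simp_all)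
  -- pointwise description of m across two different paths
  have pt_diff : ∀ (i j : Fin 3) (p q : ℕ), i ≠ j → p ≤ q → q ≤ k →
      ∀ r ∈ Finset.Ioc 0 ((k + 1) / 2),
      m r (i, p) (j, q) = (if 0 < r ∧ r ≤ min (min p (k - p)) (k / 2) then (1 : ℝ) else 0)
        + (if 0 < r ∧ r ≤ min (min q (k - q)) (k / 2) then 1 else 0)
        + (if max p (k - q) < r ∧ r ≤ k / 2 then 1 else 0)
        + (if max p (k - q) < r ∧ r ≤ (k + 1) / 2 then 1 else 0) := by
    intro i j p q hij hpq hq r hr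
    have hij' : (i : ℕ) ≠ (j : ℕ) := fun h => hij (Fin.val_injective h)
    simp only [Finset.mem_Ioc] at hr
    by_cases h2 : 2 * r ≤ k
    · rw [hm23 r (by omega) h2, hcls, hcls]
      split_ifs <;> first | (exfalso; omega) | (norm_num; done) | (exfalso; tauto) | (exfalso; simp_all)
    · have hodd : k % 2 = 1 := by omega
      have hrH : r = (k + 1) / 2 := by omega
      subst hrH
      rw [hmcut hodd (i, p) (j, q)]
      show (if (p ≤ k / 2 ↔ q ≤ k / 2) then (0 : ℝ) else 1) = _
      split_ifs <;> first | (exfalso; omega) | (norm_num; done) | (exfalso; tauto) | (exfalso; simp_all)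
  -- summed versions
  have sum_same : ∀ (i : Fin 3) (p q : ℕ), p ≤ q → q ≤ k →
      (∑ r ∈ Finset.Ioc 0 ((k + 1) / 2), lam r * m r (i, p) (i, q))
        = Tsum lam p (min q ((k + 1) / 2))
          + Tsum lam (k - q) (min (min (k - p) (k / 2)) ((k + 1) / 2)) := by
    intro i p q hpq hq
    rw [Finset.sum_congr rfl (fun r hr =>
      (by rw [pt_same i p q hpq hq r hr]; split_ifs <;> ring :
        lam r * m r (i, p) (i, q) = (if p < r ∧ r ≤ q then lam r else 0)
          + (if k - q < r ∧ r ≤ min (k - p) (k / 2) then lam r else 0)))]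
    rw [Finset.sum_add_distrib, Tsum_ind, Tsum_ind]
  have sum_diff : ∀ (i j : Fin 3) (p q : ℕ), i ≠ j → p ≤ q → q ≤ k →
      (∑ r ∈ Finset.Ioc 0 ((k + 1) / 2), lam r * m r (i, p) (j, q))
        = Tsum lam 0 (min p (k - p)) + Tsum lam 0 (min q (k - q))
          + Tsum lam (max p (k - q)) (k / 2) + Tsum lam (max p (k - q)) ((k + 1) / 2) := by
    intro i j p q hij hpq hq
    have hp : p ≤ k := le_trans hpq hq
    rw [Finset.sum_congr rfl (fun r hr =>
      (by rw [pt_diff i j p q hij hpq hq r hr]; split_ifs <;> ring :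
        lam r * m r (i, p) (j, q)
          = (if 0 < r ∧ r ≤ min (min p (k - p)) (k / 2) then lam r else 0)
            + (if 0 < r ∧ r ≤ min (min q (k - q)) (k / 2) then lam r else 0)
            + (if max p (k - q) < r ∧ r ≤ k / 2 then lam r else 0)
            + (if max p (k - q) < r ∧ r ≤ (k + 1) / 2 then lam r else 0)))]
    simp only [Finset.sum_add_distrib]
    rw [Tsum_ind, Tsum_ind, Tsum_ind, Tsum_ind,
      show min (min (min p (k - p)) (k / 2)) ((k + 1) / 2) = min p (k - p) from by omega,
      show min (min (min q (k - q)) (k / 2)) ((k + 1) / 2) = min q (k - q) from by omega,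
      show min (k / 2) ((k + 1) / 2) = k / 2 from by omega,
      show min ((k + 1) / 2) ((k + 1) / 2) = (k + 1) / 2 from by omega]
  -- the key lemma, assuming p ≤ q
  have key : ∀ (i j : Fin 3) (p q : ℕ), p ≤ q → q ≤ k →
      d (i, p) (j, q) = ∑ r ∈ Finset.Ioc 0 ((k + 1) / 2), lam r * m r (i, p) (j, q) := by
    intro i j p q hpq hq
    have hp : p ≤ k := le_trans hpq hq
    by_cases hij : i = j
    · subst hij
      rw [hd_same i p q hp hq, sum_same i p q hpq hq,
        show min p q = p from by omega, show max p q = q from by omega,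
        show Finset.Icc (p + 1) q = Finset.Ioc p q from by
          ext x; simp only [Finset.mem_Icc, Finset.mem_Ioc]; omega]
      exact (core_same hsymm hpq hq).symm
    · rw [hd_diff i j p q hij hp hq, sum_diff i j p q hij hpq hq,
        show Finset.Icc 1 p = Finset.Ioc 0 p from by
          ext x; simp only [Finset.mem_Icc, Finset.mem_Ioc]; omega,
        show Finset.Icc 1 q = Finset.Ioc 0 q from by
          ext x; simp only [Finset.mem_Icc, Finset.mem_Ioc]; omega,
        show Finset.Icc (p + 1) k = Finset.Ioc p k from by
          ext x; simp only [Finset.mem_Icc, Finset.mem_Ioc]; omega,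
        show Finset.Icc (q + 1) k = Finset.Ioc q k from by
          ext x; simp only [Finset.mem_Icc, Finset.mem_Ioc]; omega,
        show (∑ r ∈ Finset.Ioc 0 p, lam r) = Tsum lam 0 p from rfl,
        show (∑ r ∈ Finset.Ioc 0 q, lam r) = Tsum lam 0 q from rfl]
      have hTp : (∑ r ∈ Finset.Ioc p k, lam r) = Tsum lam 0 (k - p) := by
        rw [show (∑ r ∈ Finset.Ioc p k, lam r) = Tsum lam p k from rfl,
          Tsum_sym hsymm p (le_refl k), show k - k = 0 from by omega]
      have hTq : (∑ r ∈ Finset.Ioc q k, lam r) = Tsum lam 0 (k - q) := by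
        rw [show (∑ r ∈ Finset.Ioc q k, lam r) = Tsum lam q k from rfl,
          Tsum_sym hsymm q (le_refl k), show k - k = 0 from by omega]
      rw [hTp, hTq]
      by_cases hs : p + q ≤ k
      · rw [min_eq_left (by
          have h1 : Tsum lam 0 p ≤ Tsum lam 0 (k - q) := Tsum_mono hpos (by omega) (by omega)
          have h2 : Tsum lam 0 q ≤ Tsum lam 0 (k - p) := Tsum_mono hpos (by omega) (by omega)
          linarith)]
        exact (core_diff hsymm hpq hs hq).symm
      · rw [min_eq_right (by
          have h1 : Tsum lam 0 (k - q) ≤ Tsum lam 0 p := Tsum_mono hpos (by omega) hp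
          have h2 : Tsum lam 0 (k - p) ≤ Tsum lam 0 q := Tsum_mono hpos (by omega) hq
          linarith)]
        have hc := core_diff hsymm (p := k - q) (q := k - p) (by omega) (by omega) (by omega)
        rw [show min (k - q) (k - (k - q)) = min q (k - q) from by omega,
          show min (k - p) (k - (k - p)) = min p (k - p) from by omega,
          show max (k - q) (k - (k - p)) = max p (k - q) from by omega] at hc
        linarith
  -- conclude
  intro u v hu hv
  obtain ⟨i, p⟩ := u
  obtain ⟨j, q⟩ := v
  replace hu : p ≤ k := hu
  replace hv : q ≤ k := hv
  rw [hIccIoc]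
  rcases le_total p q with h | h
  · exact key i j p q h hv
  · have msym : ∀ r ∈ Finset.Ioc 0 ((k + 1) / 2),
        lam r * m r (i, p) (j, q) = lam r * m r (j, q) (i, p) := by
      intro r hr
      simp only [Finset.mem_Ioc] at hr
      by_cases h2 : 2 * r ≤ k
      · rw [hm23 r (by omega) h2, hm23 r (by omega) h2]
        split_ifs <;> first | rfl | omega
      · have hodd : k % 2 = 1 := by omega
        have hrH : r = (k + 1) / 2 := by omega
        subst hrH
        rw [hmcut hodd (i, p) (j, q), hmcut hodd (j, q) (i, p)]
        split_ifs <;> first | rfl | tauto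
    rw [Finset.sum_congr rfl msym, ← key j i q p h hu]
    by_cases hij : i = j
    · subst hij
      rw [hd_same i p q hu hv, hd_same i q p hv hu, min_comm p q, max_comm p q]
    · rw [hd_diff i j p q hij hu hv, hd_diff j i q p (Ne.symm hij) hv hu]
      congr 1 <;> ring
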